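/- The double series \(\sum_{m=1}^\infty \sum_{n<m} m^{-s_1} n^{-s_2} (m+n)^{-s_3}\) converges absolutely whenever \(\Re(s_1)+\Re(s_3) > 1\) and \(\Re(s_1)+\Re(s_2)+\Re(s_3) > 2\). -/

import Mathlib

/-- The Apostol-Vu double series converges absolutely when
`Re s₁ + Re s₃ > 1` and `Re s₁ + Re s₂ + Re s₃ > 2`. -/
theorem apostolVu_summable (s₁ s₂ s₃ : ℂ) (h13 : 1 < s₁.re + s₃.re)
    (h123 : 2 < s₁.re + s₂.re + s₃.re) :
    Summable (fun p : ℕ × ℕ => if 1 ≤ p.2 ∧ p.2 < p.1 then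
      ‖((p.1 : ℂ) ^ s₁ * (p.2 : ℂ) ^ s₂ * ((p.1 : ℂ) + (p.2 : ℂ)) ^ s₃)⁻¹‖ else 0) := by
  set a := s₁.re + s₃.re with ha
  set δ : ℝ := (max 0 (1 - s₂.re) + (a - 1)) / 2 with hδdef
  have hmax1 := le_max_left (0:ℝ) (1 - s₂.re)
  have hmax2 := le_max_right (0:ℝ) (1 - s₂.re)
  have hmax3 : max (0:ℝ) (1 - s₂.re) < a - 1 :=
    max_lt (by linarith) (by linarith)
  have hδ0 : 0 ≤ δ := by rw [hδdef]; linarith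
  have hpe : 1 < a - δ := by rw [hδdef]; linarith
  have hqe : 1 < s₂.re + δ := by rw [hδdef]; linarith
  set C : ℝ := max 1 ((2:ℝ) ^ (-s₃.re)) with hC
  have hC0 : (0:ℝ) ≤ C := le_trans zero_le_one (le_max_left _ _)
  have hC1 : (1:ℝ) ≤ C := le_max_left _ _
  have hC2 : (2:ℝ) ^ (-s₃.re) ≤ C := le_max_right _ _
  clear_value δ C
  clear hδdef hC hmax1 hmax2 hmax3
  have hsum : Summable (fun p : ℕ × ℕ =>
      (C * (p.1:ℝ) ^ (-(a - δ))) * ((p.2:ℝ) ^ (-(s₂.re + δ)))) := by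
    apply Summable.mul_of_nonneg
      (f := fun m : ℕ => C * (m:ℝ) ^ (-(a - δ))) (g := fun n : ℕ => (n:ℝ) ^ (-(s₂.re + δ)))
    · exact (Real.summable_nat_rpow.mpr (by linarith)).mul_left C
    · exact Real.summable_nat_rpow.mpr (by linarith)
    · intro n
      exact mul_nonneg hC0 (Real.rpow_nonneg (Nat.cast_nonneg _) _)
    · intro n; exact Real.rpow_nonneg (Nat.cast_nonneg _) _
  apply Summable.of_nonneg_of_le _ _ hsum
  · intro p
    by_cases h : 1 ≤ p.2 ∧ p.2 < p.1 <;> simp only [h, if_true, if_false] <;> positivity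
  · rintro ⟨m, n⟩
    by_cases h : 1 ≤ n ∧ n < m
    · simp only [h, if_true]
      obtain ⟨hn1, hnm⟩ := h
      have hm1 : 1 ≤ m := hn1.trans hnm.le
      have hn : (1:ℝ) ≤ (n:ℝ) := by exact_mod_cast hn1
      have hm : (1:ℝ) ≤ (m:ℝ) := by exact_mod_cast hm1
      have hnm' : (n:ℝ) ≤ (m:ℝ) := by exact_mod_cast hnm.le
      have hmpos : (0:ℝ) < (m:ℝ) := by linarith
      have hnpos : (0:ℝ) < (n:ℝ) := by linarith
      have hmn : (0:ℝ) < (m:ℝ) + (n:ℝ) := by linarith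
      -- rewrite the norm
      have hnorm : ‖((m : ℂ) ^ s₁ * (n : ℂ) ^ s₂ * ((m : ℂ) + (n : ℂ)) ^ s₃)⁻¹‖
          = ((m:ℝ) ^ s₁.re)⁻¹ * ((n:ℝ) ^ s₂.re)⁻¹ * (((m:ℝ)+(n:ℝ)) ^ s₃.re)⁻¹ := by
        rw [norm_inv, norm_mul, norm_mul, mul_inv, mul_inv]
        have e1 : ‖(m : ℂ) ^ s₁‖ = (m:ℝ) ^ s₁.re := Complex.norm_natCast_cpow_of_pos hm1 s₁
        have e2 : ‖(n : ℂ) ^ s₂‖ = (n:ℝ) ^ s₂.re := Complex.norm_natCast_cpow_of_pos hn1 s₂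
        have e3 : ‖((m : ℂ) + (n : ℂ)) ^ s₃‖ = ((m:ℝ)+(n:ℝ)) ^ s₃.re := by
          have : ((m : ℂ) + (n : ℂ)) = ((((m:ℝ)+(n:ℝ)) : ℝ) : ℂ) := by push_cast; ring
          rw [this, Complex.norm_cpow_eq_rpow_re_of_pos hmn]
        rw [e1, e2, e3]
      rw [hnorm]
      rw [← Real.rpow_neg hmpos.le, ← Real.rpow_neg hnpos.le, ← Real.rpow_neg hmn.le]
      -- bound (m+n)^(-σ₃) ≤ C * m^(-σ₃)
      have hb3 : ((m:ℝ)+(n:ℝ)) ^ (-s₃.re) ≤ C * (m:ℝ) ^ (-s₃.re) := by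
        rcases le_or_gt 0 s₃.re with h3 | h3
        · have h1 : ((m:ℝ)+(n:ℝ)) ^ (-s₃.re) ≤ (m:ℝ) ^ (-s₃.re) :=
            Real.rpow_le_rpow_of_nonpos hmpos (by linarith) (by linarith)
          calc ((m:ℝ)+(n:ℝ)) ^ (-s₃.re) ≤ (m:ℝ) ^ (-s₃.re) := h1
            _ = 1 * (m:ℝ) ^ (-s₃.re) := (one_mul _).symm
            _ ≤ C * (m:ℝ) ^ (-s₃.re) := by
                exact mul_le_mul_of_nonneg_right hC1 (Real.rpow_nonneg hmpos.le _)
        · have h1 : ((m:ℝ)+(n:ℝ)) ^ (-s₃.re) ≤ (2*(m:ℝ)) ^ (-s₃.re) :=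
            Real.rpow_le_rpow hmn.le (by linarith) (by linarith)
          calc ((m:ℝ)+(n:ℝ)) ^ (-s₃.re) ≤ (2*(m:ℝ)) ^ (-s₃.re) := h1
            _ = (2:ℝ) ^ (-s₃.re) * (m:ℝ) ^ (-s₃.re) :=
                Real.mul_rpow (by norm_num) hmpos.le
            _ ≤ C * (m:ℝ) ^ (-s₃.re) := by
                exact mul_le_mul_of_nonneg_right hC2 (Real.rpow_nonneg hmpos.le _)
      -- bound n^(-σ₂) ≤ m^δ * n^(-(σ₂+δ))
      have hb2 : (n:ℝ) ^ (-s₂.re) ≤ (m:ℝ) ^ δ * (n:ℝ) ^ (-(s₂.re + δ)) := by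
        have : (n:ℝ) ^ (-s₂.re) = (n:ℝ) ^ δ * (n:ℝ) ^ (-(s₂.re + δ)) := by
          rw [← Real.rpow_add hnpos]; congr 1; ring
        rw [this]
        exact mul_le_mul_of_nonneg_right (Real.rpow_le_rpow hnpos.le hnm' hδ0)
          (Real.rpow_nonneg hnpos.le _)
      have hmerge : (m:ℝ) ^ (-s₁.re) * ((m:ℝ) ^ δ * (m:ℝ) ^ (-s₃.re)) = (m:ℝ) ^ (-(a - δ)) := by
        rw [← Real.rpow_add hmpos, ← Real.rpow_add hmpos]
        congr 1; rw [ha]; ring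
      calc (m:ℝ) ^ (-s₁.re) * (n:ℝ) ^ (-s₂.re) * ((m:ℝ)+(n:ℝ)) ^ (-s₃.re)
          ≤ (m:ℝ) ^ (-s₁.re) * ((m:ℝ) ^ δ * (n:ℝ) ^ (-(s₂.re + δ))) * (C * (m:ℝ) ^ (-s₃.re)) := by
            apply mul_le_mul
            · exact mul_le_mul_of_nonneg_left hb2 (Real.rpow_nonneg hmpos.le _)
            · exact hb3
            · exact Real.rpow_nonneg hmn.le _
            · positivity
        _ = (C * ((m:ℝ) ^ (-s₁.re) * ((m:ℝ) ^ δ * (m:ℝ) ^ (-s₃.re)))) * (n:ℝ) ^ (-(s₂.re + δ)) := by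
            ring
        _ = (C * (m:ℝ) ^ (-(a - δ))) * ((n:ℝ) ^ (-(s₂.re + δ))) := by rw [hmerge]
    · simp only [h, if_false]
      positivity
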